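/- Let f : ℝⁿ → ℝ be twice continuously differentiable, μ-strongly convex with μ > 0, and with L-Lipschitz Hessian, L > 0. Let σ ∈ (0,1] and 0 < ω ≤ ξ ≤ 1. Suppose x⁺ ∈ ℝⁿ is obtained from x ∈ ℝⁿ in one of the following two ways: (a) x⁺ = x − P(R∇²f(x)P)⁻¹R∇f(x) is a coarse step for some full-row-rank R ∈ ℝ^{p×n} with P := Rᵀ whose singular values all lie in [ω, ξ], and the acceptance condition ‖R∇f(x⁺)‖ ≥ σ‖∇f(x⁺)‖ holds; or (b) x⁺ = x − ∇²f(x)⁻¹∇f(x) is the full Newton step. Then ‖∇f(x⁺)‖ ≤ (Lξ⁴/(2σμ²ω⁴)) ‖∇f(x)‖². -/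

import Mathlib

open Matrix

noncomputable section

/-- The spectral (`ℓ²`-operator) norm of a real matrix, i.e. the operator norm of the
induced linear map between Euclidean spaces. -/
def Matrix.specNorm {m n : ℕ} (A : Matrix (Fin m) (Fin n) ℝ) : ℝ :=
  ‖LinearMap.toContinuousLinearMap (Matrix.toEuclideanLin A)‖

/-- The `i`-th singular value of `P := Rᵀ`, i.e. the square root of the `i`-th eigenvalue of
the positive semidefinite matrix `PᴴP = R Rᴴ`. -/
def Matrix.singularValueT {p n : ℕ} (R : Matrix (Fin p) (Fin n) ℝ) (i : Fin p) : ℝ :=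
  Real.sqrt ((Matrix.isHermitian_mul_conjTranspose_self R).eigenvalues i)

open scoped RealInnerProductSpace

/-! ### Auxiliary lemmas -/

private lemma tel_mul {a b c : ℕ} (A : Matrix (Fin a) (Fin b) ℝ) (B : Matrix (Fin b) (Fin c) ℝ)
    (v : EuclideanSpace ℝ (Fin c)) :
    Matrix.toEuclideanLin (A * B) v = Matrix.toEuclideanLin A (Matrix.toEuclideanLin B v) := by
  simp [Matrix.toEuclideanLin_apply, Matrix.mulVec_mulVec]

private lemma inner_tel {m k : ℕ} (M : Matrix (Fin m) (Fin k) ℝ) (v : EuclideanSpace ℝ (Fin k))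
    (w : EuclideanSpace ℝ (Fin m)) :
    ⟪w, Matrix.toEuclideanLin M v⟫ =
      dotProduct (WithLp.equiv 2 _ w) (M *ᵥ (WithLp.equiv 2 _ v)) := by
  simp [Matrix.toEuclideanLin_apply, PiLp.inner_apply, dotProduct, RCLike.inner_apply]
  exact Finset.sum_congr rfl fun i _ => mul_comm _ _

private lemma norm_sq_eq_dot {k : ℕ} (v : EuclideanSpace ℝ (Fin k)) :
    ‖v‖ ^ 2 = dotProduct (WithLp.equiv 2 _ v) (WithLp.equiv 2 _ v) := by
  rw [← real_inner_self_eq_norm_sq]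
  simp [PiLp.inner_apply, dotProduct, RCLike.inner_apply]
  rw [EuclideanSpace.norm_sq_eq]; simp [Real.norm_eq_abs, sq_abs, sq]

private lemma tel_transpose_inner {m k : ℕ} (R : Matrix (Fin m) (Fin k) ℝ)
    (v : EuclideanSpace ℝ (Fin k)) (w : EuclideanSpace ℝ (Fin m)) :
    ⟪Matrix.toEuclideanLin Rᵀ w, v⟫ = ⟪w, Matrix.toEuclideanLin R v⟫ := by
  rw [← Matrix.conjTranspose_eq_transpose_of_trivial,
    Matrix.toEuclideanLin_conjTranspose_eq_adjoint, LinearMap.adjoint_inner_left]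

private lemma sq_le_imp {a b : ℝ} (hb : 0 ≤ b) (h : a ^ 2 ≤ b ^ 2) : a ≤ b := by nlinarith

private lemma eigenbasis_act {p : ℕ} {M : Matrix (Fin p) (Fin p) ℝ} (hM : M.IsHermitian)
    (i : Fin p) :
    Matrix.toEuclideanLin M (hM.eigenvectorBasis i) = hM.eigenvalues i • hM.eigenvectorBasis i := by
  have := hM.mulVec_eigenvectorBasis i
  apply (WithLp.equiv 2 (Fin p → ℝ)).injective
  simpa [Matrix.toEuclideanLin_apply] using this

private lemma inner_toEuclideanLin_eq_sum {p : ℕ} {M : Matrix (Fin p) (Fin p) ℝ}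
    (hM : M.IsHermitian) (w : EuclideanSpace ℝ (Fin p)) :
    ⟪w, Matrix.toEuclideanLin M w⟫ = ∑ i, hM.eigenvalues i * ⟪hM.eigenvectorBasis i, w⟫ ^ 2 := by
  have hsymm := (Matrix.isHermitian_iff_isSymmetric).1 hM
  rw [← hM.eigenvectorBasis.sum_inner_mul_inner w (Matrix.toEuclideanLin M w)]
  refine Finset.sum_congr rfl fun i _ => ?_
  rw [← hsymm (hM.eigenvectorBasis i) w, eigenbasis_act hM, inner_smul_left]
  have h : ⟪w, hM.eigenvectorBasis i⟫ = ⟪hM.eigenvectorBasis i, w⟫ := real_inner_comm _ _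
  rw [h]; push_cast [conj_trivial]; ring

private lemma rayleigh_bounds {p : ℕ} {M : Matrix (Fin p) (Fin p) ℝ} (hM : M.IsHermitian)
    {a b : ℝ} (ha : ∀ i, a ≤ hM.eigenvalues i) (hb : ∀ i, hM.eigenvalues i ≤ b)
    (w : EuclideanSpace ℝ (Fin p)) :
    a * ‖w‖ ^ 2 ≤ ⟪w, Matrix.toEuclideanLin M w⟫ ∧
      ⟪w, Matrix.toEuclideanLin M w⟫ ≤ b * ‖w‖ ^ 2 := by
  have hnorm : ‖w‖ ^ 2 = ∑ i, ⟪hM.eigenvectorBasis i, w⟫ ^ 2 := by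
    rw [← real_inner_self_eq_norm_sq, ← hM.eigenvectorBasis.sum_inner_mul_inner w w]
    refine Finset.sum_congr rfl fun i _ => ?_
    rw [real_inner_comm w]; ring
  rw [inner_toEuclideanLin_eq_sum hM, hnorm]
  constructor
  · rw [Finset.mul_sum]
    exact Finset.sum_le_sum fun i _ => mul_le_mul_of_nonneg_right (ha i) (sq_nonneg _)
  · rw [Finset.mul_sum]
    exact Finset.sum_le_sum fun i _ => mul_le_mul_of_nonneg_right (hb i) (sq_nonneg _)

private lemma coercive_norm_le {k : ℕ} (M : Matrix (Fin k) (Fin k) ℝ) (c : ℝ)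
    (hco : ∀ v : EuclideanSpace ℝ (Fin k), c * ‖v‖ ^ 2 ≤ ⟪v, Matrix.toEuclideanLin M v⟫)
    (v : EuclideanSpace ℝ (Fin k)) : c * ‖v‖ ≤ ‖Matrix.toEuclideanLin M v‖ := by
  rcases eq_or_ne v 0 with rfl | hv
  · simp
  · have h1 := hco v
    have h2 : ⟪v, Matrix.toEuclideanLin M v⟫ ≤ ‖v‖ * ‖Matrix.toEuclideanLin M v‖ :=
      real_inner_le_norm _ _
    have hv' : 0 < ‖v‖ := norm_pos_iff.2 hv
    nlinarith

private lemma coercive_posdef {k : ℕ} (M : Matrix (Fin k) (Fin k) ℝ) (hM : M.IsHermitian) (c : ℝ)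
    (hc : 0 < c)
    (hco : ∀ v : EuclideanSpace ℝ (Fin k), c * ‖v‖ ^ 2 ≤ ⟪v, Matrix.toEuclideanLin M v⟫) :
    M.PosDef := by
  refine Matrix.posDef_iff_dotProduct_mulVec.mpr ⟨hM, fun v hv => ?_⟩
  set w : EuclideanSpace ℝ (Fin k) := (WithLp.equiv 2 (Fin k → ℝ)).symm v with hw
  have hw0 : w ≠ 0 := by
    intro h; apply hv
    have := congrArg (WithLp.equiv 2 (Fin k → ℝ)) h
    simpa [hw] using this
  have h1 := hco w
  have h2 : ⟪w, Matrix.toEuclideanLin M w⟫ = dotProduct (star v) (M *ᵥ v) := by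
    rw [inner_tel]; simp [hw]
  have hwpos : 0 < ‖w‖ := norm_pos_iff.2 hw0
  rw [← h2]
  have : 0 < c * ‖w‖ ^ 2 := by positivity
  linarith

private lemma coercive_inv {k : ℕ} (M : Matrix (Fin k) (Fin k) ℝ) (hM : M.IsHermitian) (c : ℝ)
    (hc : 0 < c)
    (hco : ∀ v : EuclideanSpace ℝ (Fin k), c * ‖v‖ ^ 2 ≤ ⟪v, Matrix.toEuclideanLin M v⟫) :
    M * M⁻¹ = 1 ∧
      ∀ u : EuclideanSpace ℝ (Fin k), ‖Matrix.toEuclideanLin M⁻¹ u‖ ≤ c⁻¹ * ‖u‖ := by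
  have hpd := coercive_posdef M hM c hc hco
  have hdet : IsUnit M.det := hpd.det_pos.ne'.isUnit
  have hinv : M * M⁻¹ = 1 := Matrix.mul_nonsing_inv M hdet
  refine ⟨hinv, fun u => ?_⟩
  have h1 : Matrix.toEuclideanLin M (Matrix.toEuclideanLin M⁻¹ u) = u := by
    rw [← tel_mul, hinv]
    simp [Matrix.toEuclideanLin_apply]
  have h2 := coercive_norm_le M c hco (Matrix.toEuclideanLin M⁻¹ u)
  rw [h1] at h2
  rw [← mul_le_mul_iff_right₀ hc, ← mul_assoc, mul_inv_cancel₀ hc.ne', one_mul]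
  exact h2

private lemma taylor_bound {n : ℕ} (g : EuclideanSpace ℝ (Fin n) → EuclideanSpace ℝ (Fin n))
    (H : EuclideanSpace ℝ (Fin n) → Matrix (Fin n) (Fin n) ℝ)
    (hH : ∀ y, HasFDerivAt g (Matrix.toEuclideanCLM (𝕜 := ℝ) (H y)) y)
    (L : ℝ) (hL : 0 ≤ L)
    (hLip : ∀ y z, ‖Matrix.toEuclideanCLM (𝕜 := ℝ) (H y) - Matrix.toEuclideanCLM (𝕜 := ℝ) (H z)‖
      ≤ L * ‖y - z‖)
    (x xp : EuclideanSpace ℝ (Fin n)) :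
    ‖g xp - g x - Matrix.toEuclideanCLM (𝕜 := ℝ) (H x) (xp - x)‖ ≤ L / 2 * ‖xp - x‖ ^ 2 := by
  set d := xp - x with hd
  set φ : ℝ → EuclideanSpace ℝ (Fin n) :=
    fun t => g (x + t • d) - g x - t • (Matrix.toEuclideanCLM (𝕜 := ℝ) (H x) d) with hφ
  set φ' : ℝ → EuclideanSpace ℝ (Fin n) :=
    fun t => (Matrix.toEuclideanCLM (𝕜 := ℝ) (H (x + t • d)) -
      Matrix.toEuclideanCLM (𝕜 := ℝ) (H x)) d with hφ'
  have hderiv : ∀ t : ℝ, HasDerivAt φ (φ' t) t := by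
    intro t
    have h1 : HasDerivAt (fun t : ℝ => x + t • d) d t := by
      simpa using ((hasDerivAt_id t).smul_const d).const_add x
    have h2 := (hH (x + t • d)).comp_hasDerivAt t h1
    have h3 : HasDerivAt (fun t : ℝ => t • (Matrix.toEuclideanCLM (𝕜 := ℝ) (H x) d))
        (Matrix.toEuclideanCLM (𝕜 := ℝ) (H x) d) t := by
      simpa using (hasDerivAt_id t).smul_const (Matrix.toEuclideanCLM (𝕜 := ℝ) (H x) d)
    have := (h2.sub_const (g x)).sub h3
    exact this
  have hc : Continuous fun t : ℝ => Matrix.toEuclideanCLM (𝕜 := ℝ) (H (x + t • d)) := by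
    have : LipschitzWith (Real.toNNReal (L * ‖d‖))
        (fun t : ℝ => Matrix.toEuclideanCLM (𝕜 := ℝ) (H (x + t • d))) := by
      apply LipschitzWith.of_dist_le_mul
      intro s t
      rw [dist_eq_norm, dist_eq_norm]
      calc ‖Matrix.toEuclideanCLM (𝕜 := ℝ) (H (x + s • d)) -
            Matrix.toEuclideanCLM (𝕜 := ℝ) (H (x + t • d))‖
          ≤ L * ‖(x + s • d) - (x + t • d)‖ := hLip _ _
        _ ≤ Real.toNNReal (L * ‖d‖) * ‖s - t‖ := by
            rw [show (x + s • d) - (x + t • d) = (s - t) • d by module,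
              norm_smul, Real.coe_toNNReal _ (by positivity)]
            rw [Real.norm_eq_abs]; ring_nf; rfl
    exact this.continuous
  have hφ'c : Continuous φ' := (hc.sub continuous_const).clm_apply continuous_const
  have hint : φ 1 - φ 0 = ∫ t in (0:ℝ)..1, φ' t :=
    (intervalIntegral.integral_eq_sub_of_hasDerivAt (fun t _ => hderiv t)
      (hφ'c.intervalIntegrable 0 1)).symm
  have hφ0 : φ 0 = 0 := by simp [hφ]
  have hφ1 : φ 1 = g xp - g x - Matrix.toEuclideanCLM (𝕜 := ℝ) (H x) d := by
    simp [hφ, hd]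
  have hbound : ‖∫ t in (0:ℝ)..1, φ' t‖ ≤ |∫ t in (0:ℝ)..1, L * ‖d‖ ^ 2 * t| := by
    apply intervalIntegral.norm_integral_le_abs_of_norm_le
    · refine (MeasureTheory.ae_restrict_iff' measurableSet_uIoc).2 (Filter.Eventually.of_forall ?_)
      intro t ht
      rw [Set.uIoc_of_le (by norm_num : (0:ℝ) ≤ 1)] at ht
      obtain ⟨ht0, ht1⟩ := ht
      calc ‖φ' t‖ ≤ ‖Matrix.toEuclideanCLM (𝕜 := ℝ) (H (x + t • d)) -
            Matrix.toEuclideanCLM (𝕜 := ℝ) (H x)‖ * ‖d‖ := ContinuousLinearMap.le_opNorm _ _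
        _ ≤ (L * ‖(x + t • d) - x‖) * ‖d‖ :=
            mul_le_mul_of_nonneg_right (hLip _ _) (norm_nonneg _)
        _ = L * ‖d‖ ^ 2 * t := by
            rw [add_sub_cancel_left, norm_smul, Real.norm_eq_abs, abs_of_pos ht0]; ring
    · exact ((continuous_const.mul continuous_id).intervalIntegrable 0 1)
  have hval : (∫ t in (0:ℝ)..1, L * ‖d‖ ^ 2 * t) = L / 2 * ‖d‖ ^ 2 := by
    rw [intervalIntegral.integral_const_mul, integral_id]; ring
  calc ‖g xp - g x - Matrix.toEuclideanCLM (𝕜 := ℝ) (H x) d‖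
      = ‖φ 1 - φ 0‖ := by rw [hφ0, hφ1, sub_zero]
    _ = ‖∫ t in (0:ℝ)..1, φ' t‖ := by rw [hint]
    _ ≤ |∫ t in (0:ℝ)..1, L * ‖d‖ ^ 2 * t| := hbound
    _ = L / 2 * ‖d‖ ^ 2 := by rw [hval]; exact abs_of_nonneg (by positivity)

set_option maxHeartbeats 1000000 in
/-- Theorem 4.3, case `ξ ≤ 1`. One step of the adaptive multilevel Newton
method (either an accepted coarse step or a full Newton step) satisfies
`‖∇f(x⁺)‖ ≤ (Lξ⁴/(2σμ²ω⁴)) ‖∇f(x)‖²`. -/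
theorem aml_newton_quadratic_rate_xi_le_one
    {n : ℕ}
    (f : EuclideanSpace ℝ (Fin n) → ℝ)
    (hf : ContDiff ℝ 2 f)
    (Hess : EuclideanSpace ℝ (Fin n) → Matrix (Fin n) (Fin n) ℝ)
    (hHess : ∀ y, HasFDerivAt (gradient f) (Matrix.toEuclideanCLM (𝕜 := ℝ) (Hess y)) y)
    (μ L : ℝ) (hμ : 0 < μ) (hL : 0 < L)
    (hsc : ∀ y, (Hess y - μ • (1 : Matrix (Fin n) (Fin n) ℝ)).PosSemidef)
    (hLip : ∀ y z, Matrix.specNorm (Hess y - Hess z) ≤ L * ‖y - z‖)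
    (σ : ℝ) (hσ0 : 0 < σ) (hσ1 : σ ≤ 1)
    (ω ξ : ℝ) (hω : 0 < ω) (hωξ : ω ≤ ξ) (hξ : ξ ≤ 1)
    (x xp : EuclideanSpace ℝ (Fin n))
    (hstep :
      (∃ p : ℕ, ∃ R : Matrix (Fin p) (Fin n) ℝ, p ≤ n ∧ R.rank = p ∧
        (∀ i, R.singularValueT i ∈ Set.Icc ω ξ) ∧
        xp = x - Matrix.toEuclideanLin (Rᵀ * (R * Hess x * Rᵀ)⁻¹ * R) (gradient f x) ∧
        σ * ‖gradient f xp‖ ≤ ‖Matrix.toEuclideanLin R (gradient f xp)‖) ∨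
      xp = x - Matrix.toEuclideanLin (Hess x)⁻¹ (gradient f x)) :
    ‖gradient f xp‖ ≤ L * ξ ^ 4 / (2 * σ * μ ^ 2 * ω ^ 4) * ‖gradient f x‖ ^ 2 := by
  have hξ0 : 0 < ξ := lt_of_lt_of_le hω hωξ
  have hLipCLM : ∀ y z, ‖Matrix.toEuclideanCLM (𝕜 := ℝ) (Hess y) -
      Matrix.toEuclideanCLM (𝕜 := ℝ) (Hess z)‖ ≤ L * ‖y - z‖ := by
    intro y z
    have h := hLip y z
    rw [show Matrix.specNorm (Hess y - Hess z) =
      ‖Matrix.toEuclideanCLM (𝕜 := ℝ) (Hess y - Hess z)‖ from rfl, map_sub] at h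
    exact h
  have htay := taylor_bound (gradient f) Hess hHess L hL.le hLipCLM x xp
  have hherm : ∀ y, (Hess y).IsHermitian := by
    intro y
    have h1 := (hsc y).1
    have h2 : (μ • (1 : Matrix (Fin n) (Fin n) ℝ)).IsHermitian := by
      simp [Matrix.IsHermitian]
    simpa using h1.add h2
  have hcoercH : ∀ y (v : EuclideanSpace ℝ (Fin n)),
      μ * ‖v‖ ^ 2 ≤ ⟪v, Matrix.toEuclideanLin (Hess y) v⟫ := by
    intro y v
    have h0 := (Matrix.posSemidef_iff_dotProduct_mulVec.mp (hsc y)).2 (WithLp.equiv 2 _ v)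
    rw [inner_tel, norm_sq_eq_dot]
    simp only [Matrix.sub_mulVec, Matrix.smul_mulVec, Matrix.one_mulVec, dotProduct_sub,
      dotProduct_smul, star_trivial, smul_eq_mul] at h0
    linarith
  have hCLM : ∀ (A : Matrix (Fin n) (Fin n) ℝ) (v : EuclideanSpace ℝ (Fin n)),
      Matrix.toEuclideanCLM (𝕜 := ℝ) A v = Matrix.toEuclideanLin A v := fun A v => rfl
  rcases hstep with ⟨p, R, _, _, hsv, hxp, hacc⟩ | hxp
  · -- coarse step
    set A := R * Hess x * Rᵀ with hA
    set g0 := gradient f x with hg0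
    have hpsd := Matrix.posSemidef_self_mul_conjTranspose R
    have heig : ∀ i, ω ^ 2 ≤ (Matrix.isHermitian_mul_conjTranspose_self R).eigenvalues i ∧
        (Matrix.isHermitian_mul_conjTranspose_self R).eigenvalues i ≤ ξ ^ 2 := by
      intro i
      have h0 : 0 ≤ (Matrix.isHermitian_mul_conjTranspose_self R).eigenvalues i :=
        hpsd.eigenvalues_nonneg i
      obtain ⟨hl, hu⟩ := hsv i
      constructor
      · rw [← Real.sq_sqrt h0]
        exact pow_le_pow_left₀ hω.le hl 2
      · rw [← Real.sq_sqrt h0]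
        exact pow_le_pow_left₀ (Real.sqrt_nonneg _) hu 2
    have hray := fun w => rayleigh_bounds (Matrix.isHermitian_mul_conjTranspose_self R)
      (fun i => (heig i).1) (fun i => (heig i).2) w
    have hRT : R * Rᴴ = R * Rᵀ := by rw [Matrix.conjTranspose_eq_transpose_of_trivial]
    have hPT_sq : ∀ w : EuclideanSpace ℝ (Fin p),
        ‖Matrix.toEuclideanLin Rᵀ w‖ ^ 2 = ⟪w, Matrix.toEuclideanLin (R * Rᴴ) w⟫ := by
      intro w
      rw [← real_inner_self_eq_norm_sq, tel_transpose_inner, hRT, tel_mul]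
    have hPTlow : ∀ w : EuclideanSpace ℝ (Fin p),
        ω * ‖w‖ ≤ ‖Matrix.toEuclideanLin Rᵀ w‖ := by
      intro w
      refine sq_le_imp (norm_nonneg _) ?_
      rw [hPT_sq w, mul_pow]
      exact (hray w).1
    have hPThigh : ∀ w : EuclideanSpace ℝ (Fin p),
        ‖Matrix.toEuclideanLin Rᵀ w‖ ≤ ξ * ‖w‖ := by
      intro w
      refine sq_le_imp (by positivity) ?_
      rw [hPT_sq w, mul_pow]
      exact (hray w).2
    have hRhigh : ∀ v : EuclideanSpace ℝ (Fin n),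
        ‖Matrix.toEuclideanLin R v‖ ≤ ξ * ‖v‖ := by
      intro v
      have h1 : ‖Matrix.toEuclideanLin R v‖ ^ 2 =
          ⟪Matrix.toEuclideanLin Rᵀ (Matrix.toEuclideanLin R v), v⟫ := by
        rw [tel_transpose_inner, real_inner_self_eq_norm_sq]
      have h2 : ⟪Matrix.toEuclideanLin Rᵀ (Matrix.toEuclideanLin R v), v⟫ ≤
          ‖Matrix.toEuclideanLin Rᵀ (Matrix.toEuclideanLin R v)‖ * ‖v‖ := real_inner_le_norm _ _
      have h3 := hPThigh (Matrix.toEuclideanLin R v)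
      rcases eq_or_lt_of_le (norm_nonneg (Matrix.toEuclideanLin R v)) with h4 | h4
      · rw [← h4]; positivity
      · nlinarith [norm_nonneg v]
    have hAh : A.IsHermitian := by
      have hA' : A = R * Hess x * Rᴴ := by
        rw [hA, Matrix.conjTranspose_eq_transpose_of_trivial]
      show Aᴴ = A
      rw [hA', Matrix.conjTranspose_mul, Matrix.conjTranspose_mul,
        Matrix.conjTranspose_conjTranspose, hherm x, Matrix.mul_assoc]
    have hAapp : ∀ w : EuclideanSpace ℝ (Fin p), Matrix.toEuclideanLin A w =
        Matrix.toEuclideanLin R (Matrix.toEuclideanLin (Hess x)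
          (Matrix.toEuclideanLin Rᵀ w)) := by
      intro w
      rw [hA, tel_mul, tel_mul]
    have hcoA : ∀ w : EuclideanSpace ℝ (Fin p),
        (μ * ω ^ 2) * ‖w‖ ^ 2 ≤ ⟪w, Matrix.toEuclideanLin A w⟫ := by
      intro w
      rw [hAapp w, ← tel_transpose_inner]
      have h2 := hcoercH x (Matrix.toEuclideanLin Rᵀ w)
      have h3 := hPTlow w
      have h4 : (ω * ‖w‖) ^ 2 ≤ ‖Matrix.toEuclideanLin Rᵀ w‖ ^ 2 :=
        pow_le_pow_left₀ (by positivity) h3 2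
      have h5 : μ * (ω * ‖w‖) ^ 2 ≤ μ * ‖Matrix.toEuclideanLin Rᵀ w‖ ^ 2 :=
        mul_le_mul_of_nonneg_left h4 hμ.le
      calc (μ * ω ^ 2) * ‖w‖ ^ 2 = μ * (ω * ‖w‖) ^ 2 := by ring
        _ ≤ μ * ‖Matrix.toEuclideanLin Rᵀ w‖ ^ 2 := h5
        _ ≤ _ := h2
    obtain ⟨hAinv, hAinvbd⟩ := coercive_inv A hAh (μ * ω ^ 2) (by positivity) hcoA
    have hd : xp - x = -(Matrix.toEuclideanLin Rᵀ (Matrix.toEuclideanLin A⁻¹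
        (Matrix.toEuclideanLin R g0))) := by
      rw [hxp, sub_sub_cancel_left, tel_mul, tel_mul]
    have hdbd : ‖xp - x‖ ≤ ξ ^ 2 / (μ * ω ^ 2) * ‖g0‖ := by
      rw [hd, norm_neg]
      calc ‖Matrix.toEuclideanLin Rᵀ (Matrix.toEuclideanLin A⁻¹ (Matrix.toEuclideanLin R g0))‖
          ≤ ξ * ‖Matrix.toEuclideanLin A⁻¹ (Matrix.toEuclideanLin R g0)‖ := hPThigh _
        _ ≤ ξ * ((μ * ω ^ 2)⁻¹ * ‖Matrix.toEuclideanLin R g0‖) :=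
            mul_le_mul_of_nonneg_left (hAinvbd _) hξ0.le
        _ ≤ ξ * ((μ * ω ^ 2)⁻¹ * (ξ * ‖g0‖)) := by
            refine mul_le_mul_of_nonneg_left (mul_le_mul_of_nonneg_left (hRhigh g0) ?_) hξ0.le
            positivity
        _ = ξ ^ 2 / (μ * ω ^ 2) * ‖g0‖ := by field_simp
    have hkey : Matrix.toEuclideanLin R (Matrix.toEuclideanCLM (𝕜 := ℝ) (Hess x) (xp - x)) =
        -(Matrix.toEuclideanLin R g0) := by
      rw [hCLM, hd]
      simp only [map_neg]
      congr 1
      have hAA : Matrix.toEuclideanLin A (Matrix.toEuclideanLin A⁻¹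
          (Matrix.toEuclideanLin R g0)) = Matrix.toEuclideanLin R g0 := by
        rw [← tel_mul, hAinv]
        simp [Matrix.toEuclideanLin_apply]
      rw [← hAapp, hAA]
    have herr : Matrix.toEuclideanLin R (gradient f xp) = Matrix.toEuclideanLin R
        (gradient f xp - gradient f x - Matrix.toEuclideanCLM (𝕜 := ℝ) (Hess x) (xp - x)) := by
      rw [map_sub, map_sub, hkey, ← hg0]
      abel
    have hstep1 : σ * ‖gradient f xp‖ ≤ ξ * (L / 2 * ‖xp - x‖ ^ 2) := by
      refine hacc.trans ?_
      rw [herr]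
      exact (hRhigh _).trans (mul_le_mul_of_nonneg_left htay hξ0.le)
    have hstep2 : σ * ‖gradient f xp‖ ≤ ξ * (L / 2 * (ξ ^ 2 / (μ * ω ^ 2) * ‖g0‖) ^ 2) := by
      refine hstep1.trans ?_
      have h4 : ‖xp - x‖ ^ 2 ≤ (ξ ^ 2 / (μ * ω ^ 2) * ‖g0‖) ^ 2 :=
        pow_le_pow_left₀ (norm_nonneg _) hdbd 2
      exact mul_le_mul_of_nonneg_left
        (mul_le_mul_of_nonneg_left h4 (by positivity)) hξ0.le
    have hstep3 : ‖gradient f xp‖ ≤ L * ξ ^ 5 / (2 * σ * μ ^ 2 * ω ^ 4) * ‖g0‖ ^ 2 := by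
      rw [show L * ξ ^ 5 / (2 * σ * μ ^ 2 * ω ^ 4) * ‖g0‖ ^ 2 =
        (ξ * (L / 2 * (ξ ^ 2 / (μ * ω ^ 2) * ‖g0‖) ^ 2)) / σ by field_simp]
      rw [le_div_iff₀ hσ0]
      linarith [hstep2]
    refine hstep3.trans ?_
    refine mul_le_mul_of_nonneg_right ?_ (sq_nonneg _)
    have h5 : ξ ^ 5 ≤ ξ ^ 4 := pow_le_pow_of_le_one hξ0.le hξ (by norm_num)
    have h6 : L * ξ ^ 5 ≤ L * ξ ^ 4 := mul_le_mul_of_nonneg_left h5 hL.le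
    exact (div_le_div_iff_of_pos_right (by positivity)).2 h6
  · -- Newton step
    have hco := hcoercH x
    obtain ⟨hinv, hinvbd⟩ := coercive_inv (Hess x) (hherm x) μ hμ hco
    have hd : xp - x = -(Matrix.toEuclideanLin (Hess x)⁻¹ (gradient f x)) := by
      rw [hxp, sub_sub_cancel_left]
    have hHd : Matrix.toEuclideanCLM (𝕜 := ℝ) (Hess x) (xp - x) = -(gradient f x) := by
      rw [hCLM, hd, map_neg, ← tel_mul, hinv]
      simp [Matrix.toEuclideanLin_apply]
    have herr : gradient f xp - gradient f x -
        Matrix.toEuclideanCLM (𝕜 := ℝ) (Hess x) (xp - x) = gradient f xp := by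
      rw [hHd]; abel
    rw [herr] at htay
    have hdbd : ‖xp - x‖ ≤ μ⁻¹ * ‖gradient f x‖ := by
      rw [hd, norm_neg]; exact hinvbd _
    have h1 : ‖gradient f xp‖ ≤ L / 2 * (μ⁻¹ * ‖gradient f x‖) ^ 2 := by
      refine htay.trans ?_
      exact mul_le_mul_of_nonneg_left (pow_le_pow_left₀ (norm_nonneg _) hdbd 2) (by positivity)
    refine h1.trans ?_
    have hω4 : ω ^ 4 ≤ ξ ^ 4 := pow_le_pow_left₀ hω.le hωξ 4
    have h2 : σ * ω ^ 4 ≤ ξ ^ 4 := by nlinarith [pow_pos hω 4]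
    have h3 : L / (2 * μ ^ 2) ≤ L * ξ ^ 4 / (2 * σ * μ ^ 2 * ω ^ 4) := by
      rw [div_le_div_iff₀ (by positivity) (by positivity)]
      nlinarith [mul_pos hL (pow_pos hμ 2)]
    calc L / 2 * (μ⁻¹ * ‖gradient f x‖) ^ 2
        = L / (2 * μ ^ 2) * ‖gradient f x‖ ^ 2 := by field_simp
      _ ≤ L * ξ ^ 4 / (2 * σ * μ ^ 2 * ω ^ 4) * ‖gradient f x‖ ^ 2 :=
          mul_le_mul_of_nonneg_right h3 (sq_nonneg _)

end
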